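/- Restriction lemma for store typing: (a) if ℓ ∉ dom(σ), then Γ ⊢ s : σ if and only if Γ ⊢ set_ℓ(V, s) : σ; (b) if Γ ⊢ set_ℓ(V, s) : σ and σ ≤S ⟨ℓ:δ⟩ with ⟨ℓ:δ⟩ not equivalent to ωS, then Γ ⊢ V : δ. -/

import Mathlib

open Classical

/-- Locations -/
abbrev Loc := ℕ

/-! ### Syntax of λimp (de Bruijn indices) -/

mutual
inductive Val : Type where
  | var : ℕ → Val
  | lam : Comp → Val
inductive Comp : Type where
  | ret  : Val → Comp                     -- unit V
  | bind : Comp → Val → Comp              -- M ⋆ V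
  | get  : Loc → Comp → Comp              -- get_ℓ(λ.M)
  | set  : Loc → Val → Comp → Comp        -- set_ℓ(V, M)
end

/-! ### Store and lookup terms -/

mutual
inductive Store : Type where
  | emp : Store
  | upd : Loc → Lkp → Store → Store       -- set_ℓ(u, s)
inductive Lkp : Type where
  | val : Val → Lkp
  | lkp : Loc → Store → Lkp               -- get_ℓ(s)
end

def Store.dom : Store → Finset Loc
  | .emp => ∅
  | .upd ℓ _ s => insert ℓ s.dom

/-- s ∖ ℓ -/
def Store.erase (ℓ : Loc) : Store → Store
  | .emp => .emp
  | .upd ℓ' u s => if ℓ' = ℓ then s.erase ℓ else .upd ℓ' u (s.erase ℓ)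

/-! ### The equational store theory -/

mutual
/-- ⊢ s = t -/
inductive StEq : Store → Store → Prop where
  | refl (s) : StEq s s
  | symm : StEq s t → StEq t s
  | trans : StEq s t → StEq t r → StEq s r
  | congr : LkEq u u' → StEq s s' → StEq (.upd ℓ u s) (.upd ℓ u' s')
  | setGet (h : ℓ ∈ s.dom) : StEq (.upd ℓ (.lkp ℓ s) s) s
  | overwrite : StEq (.upd ℓ u (.upd ℓ w s)) (.upd ℓ u s)
  | commute (h : ℓ ≠ ℓ') :
      StEq (.upd ℓ u (.upd ℓ' w s)) (.upd ℓ' w (.upd ℓ u s))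
/-- ⊢ u = u' -/
inductive LkEq : Lkp → Lkp → Prop where
  | refl (u) : LkEq u u
  | symm : LkEq u v → LkEq v u
  | trans : LkEq u v → LkEq v w → LkEq u w
  | congr (ℓ) (h : ℓ ∈ s.dom) : StEq s s' → LkEq (.lkp ℓ s) (.lkp ℓ s')
  | getSet : LkEq (.lkp ℓ (.upd ℓ u s)) u
  | getSetNe (h : ℓ ≠ ℓ') : LkEq (.lkp ℓ (.upd ℓ' u s)) (.lkp ℓ s)
end

/-- Extensional equivalence s ≃ t of store terms. -/
def StExtEq (s t : Store) : Prop :=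
  s.dom = t.dom ∧ ∀ ℓ ∈ s.dom, LkEq (.lkp ℓ s) (.lkp ℓ t)

/-! ### Normal forms of stores -/

def Store.size : Store → ℕ
  | .emp => 0
  | .upd _ _ s => s.size + 1

theorem Store.erase_size (ℓ : Loc) : (s : Store) → (s.erase ℓ).size ≤ s.size
  | .emp => le_refl _
  | .upd ℓ' u s => by
      unfold Store.erase
      by_cases h : ℓ' = ℓ
      · simpa [h, Store.size] using le_trans (Store.erase_size ℓ s) (Nat.le_succ _)
      · simpa [h, Store.size] using Nat.succ_le_succ (Store.erase_size ℓ s)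

def Store.nf : Store → Store
  | .emp => .emp
  | .upd ℓ u s => .upd ℓ u ((s.erase ℓ).nf)
termination_by s => s.size
decreasing_by
  simp only [Store.size]
  exact Nat.lt_succ_of_le (Store.erase_size ℓ s)

/-! ### Closedness -/

mutual
def Val.ClosedUnder : ℕ → Val → Prop
  | k, .var n => n < k
  | k, .lam M => Comp.ClosedUnder (k+1) M
def Comp.ClosedUnder : ℕ → Comp → Prop
  | k, .ret V => Val.ClosedUnder k V
  | k, .bind M V => Comp.ClosedUnder k M ∧ Val.ClosedUnder k V
  | k, .get _ M => Comp.ClosedUnder (k+1) M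
  | k, .set _ V M => Val.ClosedUnder k V ∧ Comp.ClosedUnder k M
end

mutual
def Store.Closed : Store → Prop
  | .emp => True
  | .upd _ u s => u.Closed ∧ s.Closed
def Lkp.Closed : Lkp → Prop
  | .val V => Val.ClosedUnder 0 V
  | .lkp _ s => s.Closed
end

/-! ### Substitution -/

mutual
def Val.shiftAux (c : ℕ) : Val → Val
  | .var n => if n < c then .var n else .var (n+1)
  | .lam M => .lam (Comp.shiftAux (c+1) M)
def Comp.shiftAux (c : ℕ) : Comp → Comp
  | .ret V => .ret (V.shiftAux c)
  | .bind M V => .bind (M.shiftAux c) (V.shiftAux c)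
  | .get ℓ M => .get ℓ (M.shiftAux (c+1))
  | .set ℓ V M => .set ℓ (V.shiftAux c) (M.shiftAux c)
end

mutual
/-- capture-avoiding substitution of `W` for the variable `k` in a value -/
def Val.substV (k : ℕ) (W : Val) : Val → Val
  | .var n => if n = k then W else if k < n then .var (n-1) else .var n
  | .lam M => .lam (Comp.substC (k+1) (Val.shiftAux 0 W) M)
/-- capture-avoiding substitution of `W` for the variable `k` in a computation: M[W/k] -/
def Comp.substC (k : ℕ) (W : Val) : Comp → Comp
  | .ret V => .ret (Val.substV k W V)
  | .bind M V => .bind (Comp.substC k W M) (Val.substV k W V)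
  | .get ℓ M => .get ℓ (Comp.substC (k+1) (Val.shiftAux 0 W) M)
  | .set ℓ V M => .set ℓ (Val.substV k W V) (Comp.substC k W M)
end

/-- simultaneous substitution of closed values for the free variables 0,…,n-1 -/
def msubst (Vs : List Val) (M : Comp) : Comp :=
  Vs.foldl (fun acc V => Comp.substC 0 V acc) M

/-! ### Small-step reduction on configurations -/

inductive Red : Comp × Store → Comp × Store → Prop where
  | beta : Red (.bind (.ret V) (.lam M), s) (Comp.substC 0 V M, s)
  | bindl : Red (M, s) (N, t) → Red (.bind M V, s) (.bind N V, t)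
  | get : LkEq (.lkp ℓ s) (.val V) → Red (.get ℓ M, s) (Comp.substC 0 V M, s)
  | set : Red (.set ℓ V M, s) (M, .upd ℓ (.val V) s)

/-- reflexive-transitive closure →* -/
def RedStar : Comp × Store → Comp × Store → Prop := Relation.ReflTransGen Red

/-! ### Big-step convergence -/

inductive BigStep : Comp → Store → Val → Store → Prop where
  | ret : BigStep (.ret V) s V s
  | bind : BigStep M s V s' → BigStep (Comp.substC 0 V N) s' W t →
      BigStep (.bind M (.lam N)) s W t
  | get : LkEq (.lkp ℓ s) (.val V) → BigStep (Comp.substC 0 V M) s W t →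
      BigStep (.get ℓ M) s W t
  | set : BigStep M (.upd ℓ (.val V) s) W t → BigStep (.set ℓ V M) s W t

/-- the partial function M(s): the result (V,t) if (M,s) ⇓ (V,t), and ⊥ (i.e. `none`) otherwise -/
noncomputable def run (M : Comp) (s : Store) : Option (Val × Store) :=
  if h : ∃ p : Val × Store, BigStep M s p.1 p.2 then some h.choose else none

/-! ### Intersection types of the four sorts -/

mutual
/-- value types δ -/
inductive TyD : Type where
  | arrow : TyD → TyT → TyD
  | inter : TyD → TyD → TyD
  | omega : TyD
/-- store types σ -/
inductive TyS : Type where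
  | loc : Loc → TyD → TyS
  | inter : TyS → TyS → TyS
  | omega : TyS
/-- result types κ -/
inductive TyC : Type where
  | prod : TyD → TyS → TyC
  | inter : TyC → TyC → TyC
  | omega : TyC
/-- computation types τ -/
inductive TyT : Type where
  | arrow : TyS → TyC → TyT
  | inter : TyT → TyT → TyT
  | omega : TyT
end

def TyS.domS : TyS → Finset Loc
  | .loc ℓ _ => {ℓ}
  | .inter σ σ' => σ.domS ∪ σ'.domS
  | .omega => ∅

/-! ### Subtyping -/

mutual
inductive SubD : TyD → TyD → Prop where
  | refl (δ) : SubD δ δ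
  | trans : SubD δ₁ δ₂ → SubD δ₂ δ₃ → SubD δ₁ δ₃
  | leOmega (δ) : SubD δ .omega
  | interLeft : SubD (TyD.inter δ δ') δ
  | interRight : SubD (TyD.inter δ δ') δ'
  | interGlb : SubD δ δ₁ → SubD δ δ₂ → SubD δ (TyD.inter δ₁ δ₂)
  | interMono : SubD δ₁ δ₁' → SubD δ₂ δ₂' → SubD (TyD.inter δ₁ δ₂) (TyD.inter δ₁' δ₂')
  | omegaArrow : SubD .omega (.arrow .omega .omega)
  | arrowInter : SubD ((TyD.arrow δ τ).inter (.arrow δ τ')) (TyD.arrow δ (TyT.inter τ τ'))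
  | arrowMono : SubD δ' δ → SubT τ τ' → SubD (.arrow δ τ) (.arrow δ' τ')
inductive SubS : TyS → TyS → Prop where
  | refl (σ) : SubS σ σ
  | trans : SubS σ₁ σ₂ → SubS σ₂ σ₃ → SubS σ₁ σ₃
  | leOmega (σ) : SubS σ .omega
  | interLeft : SubS (TyS.inter σ σ') σ
  | interRight : SubS (TyS.inter σ σ') σ'
  | interGlb : SubS σ σ₁ → SubS σ σ₂ → SubS σ (TyS.inter σ₁ σ₂)
  | interMono : SubS σ₁ σ₁' → SubS σ₂ σ₂' → SubS (TyS.inter σ₁ σ₂) (TyS.inter σ₁' σ₂')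
  | locInter : SubS ((TyS.loc ℓ δ).inter (.loc ℓ δ')) (TyS.loc ℓ (TyD.inter δ δ'))
  | locMono : SubD δ δ' → SubS (.loc ℓ δ) (.loc ℓ δ')
inductive SubC : TyC → TyC → Prop where
  | refl (κ) : SubC κ κ
  | trans : SubC κ₁ κ₂ → SubC κ₂ κ₃ → SubC κ₁ κ₃
  | leOmega (κ) : SubC κ .omega
  | interLeft : SubC (TyC.inter κ κ') κ
  | interRight : SubC (TyC.inter κ κ') κ'
  | interGlb : SubC κ κ₁ → SubC κ κ₂ → SubC κ (TyC.inter κ₁ κ₂)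
  | interMono : SubC κ₁ κ₁' → SubC κ₂ κ₂' → SubC (TyC.inter κ₁ κ₂) (TyC.inter κ₁' κ₂')
  | omegaProd : SubC .omega (.prod .omega .omega)
  | prodInter : SubC ((TyC.prod δ σ).inter (.prod δ' σ')) (TyC.prod (TyD.inter δ δ') (TyS.inter σ σ'))
  | prodMono : SubD δ δ' → SubS σ σ' → SubC (.prod δ σ) (.prod δ' σ')
inductive SubT : TyT → TyT → Prop where
  | refl (τ) : SubT τ τ
  | trans : SubT τ₁ τ₂ → SubT τ₂ τ₃ → SubT τ₁ τ₃
  | leOmega (τ) : SubT τ .omega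
  | interLeft : SubT (TyT.inter τ τ') τ
  | interRight : SubT (TyT.inter τ τ') τ'
  | interGlb : SubT τ τ₁ → SubT τ τ₂ → SubT τ (TyT.inter τ₁ τ₂)
  | interMono : SubT τ₁ τ₁' → SubT τ₂ τ₂' → SubT (TyT.inter τ₁ τ₂) (TyT.inter τ₁' τ₂')
  | omegaArrow : SubT .omega (.arrow .omega .omega)
  | arrowInter : SubT ((TyT.arrow σ κ).inter (.arrow σ κ')) (TyT.arrow σ (TyC.inter κ κ'))
  | arrowMono : SubS σ' σ → SubC κ κ' → SubT (.arrow σ κ) (.arrow σ' κ')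
end

/-! ### Finite intersections -/

def InterD (l : List TyD) : TyD := l.foldr TyD.inter TyD.omega
def InterS (l : List TyS) : TyS := l.foldr TyS.inter TyS.omega
def InterC (l : List TyC) : TyC := l.foldr TyC.inter TyC.omega
def InterT (l : List TyT) : TyT := l.foldr TyT.inter TyT.omega

/-! ### Type assignment -/

/-- typing contexts (de Bruijn) -/
abbrev Ctx := List TyD

mutual
inductive TypV : Ctx → Val → TyD → Prop where
  | var : Γ[n]? = some δ → TypV Γ (.var n) δ
  | lam : TypC (δ :: Γ) M τ → TypV Γ (.lam M) (.arrow δ τ)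
  | omega : TypV Γ V .omega
  | inter : TypV Γ V δ → TypV Γ V δ' → TypV Γ V (TyD.inter δ δ')
  | sub : TypV Γ V δ → SubD δ δ' → TypV Γ V δ'
inductive TypC : Ctx → Comp → TyT → Prop where
  | ret : TypV Γ V δ → TypC Γ (.ret V) (.arrow σ (.prod δ σ))
  | bind : TypC Γ M (.arrow σ (.prod δ' σ')) →
      TypV Γ V (.arrow δ' (.arrow σ' (.prod δ'' σ''))) →
      TypC Γ (.bind M V) (.arrow σ (.prod δ'' σ''))
  | get : TypC (δ :: Γ) M (.arrow σ κ) →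
      TypC Γ (.get ℓ M) (.arrow ((TyS.loc ℓ δ).inter σ) κ)
  | set : TypV Γ V δ → TypC Γ M (.arrow ((TyS.loc ℓ δ).inter σ) κ) →
      ℓ ∉ σ.domS → TypC Γ (.set ℓ V M) (.arrow σ κ)
  | omega : TypC Γ M .omega
  | inter : TypC Γ M τ → TypC Γ M τ' → TypC Γ M (TyT.inter τ τ')
  | sub : TypC Γ M τ → SubT τ τ' → TypC Γ M τ'
end

mutual
inductive TypS : Ctx → Store → TyS → Prop where
  | updA : TypL Γ u δ → TypS Γ (.upd ℓ u s) (.loc ℓ δ)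
  | updB : TypS Γ s (.loc ℓ' δ) → ℓ ≠ ℓ' → TypS Γ (.upd ℓ u s) (.loc ℓ' δ)
  | omega : TypS Γ s .omega
  | inter : TypS Γ s σ → TypS Γ s σ' → TypS Γ s (TyS.inter σ σ')
  | sub : TypS Γ s σ → SubS σ σ' → TypS Γ s σ'
inductive TypL : Ctx → Lkp → TyD → Prop where
  | val : TypV Γ V δ → TypL Γ (.val V) δ
  | lkp : TypS Γ s (.loc ℓ δ) → TypL Γ (.lkp ℓ s) δ
  | omega : TypL Γ u .omega
  | inter : TypL Γ u δ → TypL Γ u δ' → TypL Γ u (TyD.inter δ δ')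
  | sub : TypL Γ u δ → SubD δ δ' → TypL Γ u δ'
end

inductive TypConf : Ctx → Comp → Store → TyC → Prop where
  | conf : TypC Γ M (.arrow σ κ) → TypS Γ s σ → TypConf Γ M s κ
  | omega : TypConf Γ M s .omega
  | inter : TypConf Γ M s κ → TypConf Γ M s κ' → TypConf Γ M s (TyC.inter κ κ')
  | sub : TypConf Γ M s κ → SubC κ κ' → TypConf Γ M s κ'

/-! ### Saturated sets -/

mutual
def SatD : TyD → Set Val
  | .omega => {V | Val.ClosedUnder 0 V}
  | .arrow δ τ =>
      {V | Val.ClosedUnder 0 V ∧ ∀ W ∈ SatD δ, Comp.bind (.ret W) V ∈ SatT τ}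
  | .inter δ δ' => SatD δ ∩ SatD δ'
def SatS : TyS → Set Store
  | .omega => {s | s.Closed}
  | .loc ℓ δ =>
      {s | s.Closed ∧ ℓ ∈ s.dom ∧ ∃ V ∈ SatD δ, LkEq (.lkp ℓ s) (.val V)}
  | .inter σ σ' => SatS σ ∩ SatS σ'
def SatC : TyC → Set (Option (Val × Store))
  | .omega => {r | ∀ V t, r = some (V, t) → Val.ClosedUnder 0 V ∧ Store.Closed t}
  | .prod δ σ => {r | ∃ V t, r = some (V, t) ∧ V ∈ SatD δ ∧ t ∈ SatS σ}
  | .inter κ κ' => SatC κ ∩ SatC κ'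
def SatT : TyT → Set Comp
  | .omega => {M | Comp.ClosedUnder 0 M}
  | .arrow σ κ => {M | Comp.ClosedUnder 0 M ∧ ∀ s ∈ SatS σ, run M s ∈ SatC κ}
  | .inter τ τ' => SatT τ ∩ SatT τ'
end

section RestrictionAux

def atomsAt : TyS → Loc → List TyD
  | .loc ℓ' δ, ℓ => if ℓ' = ℓ then [δ] else []
  | .inter σ σ', ℓ => atomsAt σ ℓ ++ atomsAt σ' ℓ
  | .omega, _ => []

def Phi (σ : TyS) (ℓ : Loc) : TyD := InterD (atomsAt σ ℓ)

theorem subD_interD_left : ∀ l1 l2 : List TyD, SubD (InterD (l1 ++ l2)) (InterD l1)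
  | [], _ => SubD.leOmega _
  | _ :: t, l2 => SubD.interMono (SubD.refl _) (subD_interD_left t l2)

theorem subD_interD_right : ∀ l1 l2 : List TyD, SubD (InterD (l1 ++ l2)) (InterD l2)
  | [], _ => SubD.refl _
  | _ :: t, l2 => SubD.trans SubD.interRight (subD_interD_right t l2)

theorem subD_interD_glb : ∀ (l1 l2 : List TyD) δ, SubD δ (InterD l1) → SubD δ (InterD l2) →
    SubD δ (InterD (l1 ++ l2))
  | [], _, _, _, h2 => h2
  | _ :: t, l2, δ, h1, h2 =>
    SubD.interGlb (SubD.trans h1 SubD.interLeft)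
      (subD_interD_glb t l2 δ (SubD.trans h1 SubD.interRight) h2)

theorem mem_domS_iff : ∀ (σ : TyS) ℓ, ℓ ∈ σ.domS ↔ atomsAt σ ℓ ≠ []
  | .loc ℓ' δ, ℓ => by
      simp only [TyS.domS, atomsAt, Finset.mem_singleton]
      by_cases h : ℓ' = ℓ <;> simp [h, eq_comm]
  | .inter σ σ', ℓ => by
      simp only [TyS.domS, atomsAt, Finset.mem_union, mem_domS_iff σ ℓ, mem_domS_iff σ' ℓ,
        ne_eq, List.append_eq_nil_iff]
      tauto
  | .omega, ℓ => by simp [TyS.domS, atomsAt]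

theorem subS_key : ∀ {σ σ' : TyS}, SubS σ σ' →
    ∀ ℓ, (ℓ ∈ σ'.domS → ℓ ∈ σ.domS) ∧ SubD (Phi σ ℓ) (Phi σ' ℓ) := by
  intro σ σ' h
  apply SubS.rec (motive_1 := fun _ _ _ => True) (motive_3 := fun _ _ _ => True)
    (motive_4 := fun _ _ _ => True)
    (motive_2 := fun σ σ' _ =>
      ∀ ℓ, (ℓ ∈ σ'.domS → ℓ ∈ σ.domS) ∧ SubD (Phi σ ℓ) (Phi σ' ℓ)) (t := h)
  all_goals try (intros; trivial)
  -- refl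
  · exact fun σ ℓ => ⟨id, SubD.refl _⟩
  -- trans
  · intro σ₁ σ₂ σ₃ h1 h2 ih1 ih2 ℓ
    exact ⟨fun m => (ih1 ℓ).1 ((ih2 ℓ).1 m), SubD.trans (ih1 ℓ).2 (ih2 ℓ).2⟩
  -- leOmega
  · exact fun σ ℓ => ⟨by simp [TyS.domS], SubD.leOmega _⟩
  -- interLeft
  · intro σ σ' ℓ
    exact ⟨fun m => by simp [TyS.domS, m], subD_interD_left _ _⟩
  -- interRight
  · intro σ σ' ℓ
    exact ⟨fun m => by simp [TyS.domS, m], subD_interD_right _ _⟩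
  -- interGlb
  · intro σ σ₁ σ₂ h1 h2 ih1 ih2 ℓ
    refine ⟨?_, subD_interD_glb _ _ _ (ih1 ℓ).2 (ih2 ℓ).2⟩
    simp only [TyS.domS, Finset.mem_union]
    rintro (m | m)
    · exact (ih1 ℓ).1 m
    · exact (ih2 ℓ).1 m
  -- interMono
  · intro σ₁ σ₁' σ₂ σ₂' h1 h2 ih1 ih2 ℓ
    refine ⟨?_, subD_interD_glb _ _ _
      (SubD.trans (subD_interD_left _ _) (ih1 ℓ).2)
      (SubD.trans (subD_interD_right _ _) (ih2 ℓ).2)⟩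
    simp only [TyS.domS, Finset.mem_union]
    rintro (m | m)
    · exact Or.inl ((ih1 ℓ).1 m)
    · exact Or.inr ((ih2 ℓ).1 m)
  -- locInter
  · intro ℓ δ δ' ℓ₀
    by_cases h : ℓ = ℓ₀
    · subst h
      refine ⟨by simp [TyS.domS], ?_⟩
      simp only [Phi, atomsAt, if_pos rfl, List.singleton_append, InterD, List.foldr]
      exact SubD.interGlb (SubD.interGlb SubD.interLeft
        (SubD.trans SubD.interRight SubD.interLeft)) (SubD.leOmega _)
    · refine ⟨by simp [TyS.domS, Ne.symm h], ?_⟩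
      simp [Phi, atomsAt, h]
      exact SubD.leOmega _
  -- locMono
  · intro δ δ' ℓ hd _ ℓ₀
    by_cases h : ℓ = ℓ₀
    · subst h
      refine ⟨id, ?_⟩
      simp only [Phi, atomsAt, if_pos rfl, InterD, List.foldr]
      exact SubD.interMono hd (SubD.refl _)
    · exact ⟨id, by simp [Phi, atomsAt, h, InterD]; exact SubD.leOmega _⟩

def entry : Store → Loc → Option Lkp
  | .emp, _ => none
  | .upd ℓ' u s, ℓ => if ℓ' = ℓ then some u else entry s ℓ

theorem typS_entry : ∀ {Γ s σ}, TypS Γ s σ →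
    ∀ ℓ, ℓ ∈ σ.domS → ∃ u, entry s ℓ = some u ∧ TypL Γ u (Phi σ ℓ) := by
  intro Γ s σ h
  apply TypS.rec (motive_2 := fun _ _ _ => True)
    (motive_1 := fun s σ _ =>
      ∀ ℓ, ℓ ∈ σ.domS → ∃ u, entry s ℓ = some u ∧ TypL Γ u (Phi σ ℓ)) (t := h)
  all_goals try (intros; trivial)
  -- updA
  · intro u δ ℓ s hu _ ℓ₀ hm
    simp only [TyS.domS, Finset.mem_singleton] at hm
    subst hm
    refine ⟨u, by simp [entry], ?_⟩
    simp only [Phi, atomsAt, if_pos rfl, InterD, List.foldr]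
    exact TypL.inter hu TypL.omega
  -- updB
  · intro s' ℓ' δ ℓu u hs hne ih ℓ₀ hm
    simp only [TyS.domS, Finset.mem_singleton] at hm
    subst hm
    obtain ⟨u', he, ht⟩ := ih ℓ₀ (by simp [TyS.domS])
    refine ⟨u', ?_, ht⟩
    simpa [entry, hne] using he
  -- inter
  · intro s' σ σ' h1 h2 ih1 ih2 ℓ hm
    simp only [TyS.domS, Finset.mem_union] at hm
    have key : ∀ τ, (ℓ ∈ τ.domS → ∃ u, entry s ℓ = some u ∧ TypL Γ u (Phi τ ℓ)) →
        (ℓ ∈ TyS.domS τ) ∨ atomsAt τ ℓ = [] := by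
      intro τ _
      by_cases hh : ℓ ∈ τ.domS
      · exact Or.inl hh
      · exact Or.inr (by_contra fun hc => hh ((mem_domS_iff τ ℓ).2 hc))
    rcases hm with hm | hm
    · obtain ⟨u, he, ht⟩ := ih1 ℓ hm
      refine ⟨u, he, ?_⟩
      by_cases hm2 : ℓ ∈ σ'.domS
      · obtain ⟨u', he', ht'⟩ := ih2 ℓ hm2
        rw [he] at he'
        cases he'
        exact TypL.sub (TypL.inter ht ht')
          (subD_interD_glb _ _ _ SubD.interLeft SubD.interRight)
      · have : atomsAt σ' ℓ = [] := by_contra fun hc => hm2 ((mem_domS_iff σ' ℓ).2 hc)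
        simpa [Phi, atomsAt, this] using ht
    · obtain ⟨u, he, ht⟩ := ih2 ℓ hm
      refine ⟨u, he, ?_⟩
      by_cases hm1 : ℓ ∈ σ.domS
      · obtain ⟨u', he', ht'⟩ := ih1 ℓ hm1
        rw [he] at he'
        cases he'
        exact TypL.sub (TypL.inter ht' ht)
          (subD_interD_glb _ _ _ SubD.interLeft SubD.interRight)
      · have : atomsAt σ ℓ = [] := by_contra fun hc => hm1 ((mem_domS_iff σ ℓ).2 hc)
        simpa [Phi, atomsAt, this] using ht
  -- sub
  · intro s' σ σ' h1 hsub ih ℓ hm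
    obtain ⟨hd, hp⟩ := subS_key hsub ℓ
    obtain ⟨u, he, ht⟩ := ih ℓ (hd hm)
    exact ⟨u, he, TypL.sub ht hp⟩

theorem typS_loc_of_entry {Γ ℓ δ} : ∀ (s : Store) u, entry s ℓ = some u → TypL Γ u δ →
    TypS Γ s (.loc ℓ δ)
  | .emp, u => by simp [entry]
  | .upd ℓ' u' s, u => by
      intro he ht
      by_cases h : ℓ' = ℓ
      · subst h
        simp [entry] at he
        subst he
        exact TypS.updA ht
      · simp only [entry, if_neg h] at he
        exact TypS.updB (typS_loc_of_entry s u he ht) h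

theorem typS_of_entry {Γ s} : ∀ σ : TyS,
    (∀ ℓ ∈ σ.domS, ∃ u, entry s ℓ = some u ∧ TypL Γ u (Phi σ ℓ)) → TypS Γ s σ
  | .omega, _ => TypS.omega
  | .loc ℓ δ, H => by
      obtain ⟨u, he, ht⟩ := H ℓ (by simp [TyS.domS])
      refine typS_loc_of_entry s u he (TypL.sub ht ?_)
      simp only [Phi, atomsAt, if_pos rfl, InterD, List.foldr]
      exact SubD.interLeft
  | .inter σ σ', H => by
      refine TypS.inter (typS_of_entry σ ?_) (typS_of_entry σ' ?_)
      · intro ℓ hm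
        obtain ⟨u, he, ht⟩ := H ℓ (by simp [TyS.domS, hm])
        exact ⟨u, he, TypL.sub ht (subD_interD_left _ _)⟩
      · intro ℓ hm
        obtain ⟨u, he, ht⟩ := H ℓ (by simp [TyS.domS, hm])
        exact ⟨u, he, TypL.sub ht (subD_interD_right _ _)⟩

theorem typL_val_inv : ∀ {Γ u δ}, TypL Γ u δ → ∀ V, u = .val V → TypV Γ V δ := by
  intro Γ u δ h
  apply TypL.rec (motive_1 := fun _ _ _ => True)
    (motive_2 := fun u δ _ => ∀ V, u = .val V → TypV Γ V δ) (t := h)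
  all_goals try (intros; trivial)
  · intro V δ hv W hw
    cases hw; exact hv
  · intro u W hw; exact TypV.omega
  · intro u δ δ' _ _ ih1 ih2 W hw
    exact TypV.inter (ih1 W hw) (ih2 W hw)
  · intro u δ δ' _ hsub ih W hw
    exact TypV.sub (ih W hw) hsub

end RestrictionAux
/-- restriction lemma for store typing. -/
theorem restriction_lemma :
    (∀ (Γ : Ctx) (ℓ : Loc) (V : Val) (s : Store) (σ : TyS), ℓ ∉ σ.domS →
      (TypS Γ s σ ↔ TypS Γ (.upd ℓ (.val V) s) σ)) ∧
    (∀ (Γ : Ctx) (ℓ : Loc) (V : Val) (s : Store) (σ : TyS) (δ : TyD),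
      TypS Γ (.upd ℓ (.val V) s) σ → SubS σ (.loc ℓ δ) →
      ¬ SubS .omega (.loc ℓ δ) → TypV Γ V δ) := by
  constructor
  · intro Γ ℓ V s σ hℓ
    constructor
    · intro h
      refine typS_of_entry σ ?_
      intro ℓ' hm
      obtain ⟨u, he, ht⟩ := typS_entry h ℓ' hm
      have hne : ℓ ≠ ℓ' := fun e => hℓ (e ▸ hm)
      refine ⟨u, ?_, ht⟩
      simpa [entry, hne] using he
    · intro h
      refine typS_of_entry σ ?_
      intro ℓ' hm
      obtain ⟨u, he, ht⟩ := typS_entry h ℓ' hm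
      have hne : ℓ ≠ ℓ' := fun e => hℓ (e ▸ hm)
      refine ⟨u, ?_, ht⟩
      simpa [entry, hne] using he
  · intro Γ ℓ V s σ δ h hsub _
    obtain ⟨hd, hp⟩ := subS_key hsub ℓ
    obtain ⟨u, he, ht⟩ := typS_entry h ℓ (hd (by simp [TyS.domS]))
    simp [entry] at he
    subst he
    have hδ : SubD (Phi (TyS.loc ℓ δ) ℓ) δ := by
      simp only [Phi, atomsAt, if_pos rfl, InterD, List.foldr]
      exact SubD.interLeft
    exact typL_val_inv (TypL.sub ht (SubD.trans hp hδ)) V rfl
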